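/- The spectral norm of the Hadamard inverse of the Wasserstein metric matrix satisfies ‖Q^{∘-1}‖_2 ≤ (1/λ^{2(n-1)})·(1-λ^{2n})/(1-λ²). -/

import Mathlib

open Matrix

/-- Operator norm of a real matrix (as a map on Euclidean space) is bounded by the
Frobenius-type quantity `√(∑ᵢⱼ (A i j)²)`. -/
lemma opNorm_le_sqrt_sum_sq {n : ℕ} (A : Matrix (Fin n) (Fin n) ℝ) :
    ‖Matrix.toEuclideanCLM (𝕜 := ℝ) A‖ ≤ Real.sqrt (∑ i, ∑ j, (A i j) ^ 2) := by
  apply ContinuousLinearMap.opNorm_le_bound _ (Real.sqrt_nonneg _)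
  intro x
  have happ : ∀ i, (Matrix.toEuclideanCLM (𝕜 := ℝ) A x) i = ∑ j, A i j * x j := fun _ => rfl
  rw [EuclideanSpace.norm_eq]
  have hx : ‖x‖ = Real.sqrt (∑ j, (x j) ^ 2) := by
    rw [EuclideanSpace.norm_eq]
    congr 1
    exact Finset.sum_congr rfl fun j _ => by rw [Real.norm_eq_abs, sq_abs]
  rw [hx, ← Real.sqrt_mul (by positivity)]
  apply Real.sqrt_le_sqrt
  rw [Finset.sum_mul]
  apply Finset.sum_le_sum
  intro i _
  rw [happ, Real.norm_eq_abs, sq_abs]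
  exact Finset.sum_mul_sq_le_sq_mul_sq _ _ _

theorem wasserstein_hadamard_inv_spectralNorm (n : ℕ) (l : ℝ) (hl : l ∈ Set.Ioo (0:ℝ) 1)
    (H : Matrix (Fin n) (Fin n) ℝ)
    (hH : ∀ i j : Fin n, H i j = (l ^ (Nat.dist (i : ℕ) (j : ℕ)))⁻¹) :
    ‖Matrix.toEuclideanCLM (𝕜 := ℝ) H‖ ≤
      (1 / l ^ (2 * (n - 1))) * ((1 - l ^ (2 * n)) / (1 - l ^ 2)) := by
  obtain ⟨hl0, hl1⟩ := hl
  have hinv1 : (1:ℝ) ≤ l⁻¹ := by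
    rw [one_le_inv_iff₀]
    exact ⟨hl0, hl1.le⟩
  set C : ℝ := ∑ k : Fin n, (l⁻¹) ^ (2 * (k : ℕ)) with hC
  have hCnonneg : 0 ≤ C := Finset.sum_nonneg fun k _ => by positivity
  have h2 : (∑ i, ∑ j, (H i j) ^ 2) ≤ C ^ 2 := by
    rw [sq, hC, Finset.sum_mul_sum]
    apply Finset.sum_le_sum
    intro i _
    apply Finset.sum_le_sum
    intro j _
    rw [hH, ← inv_pow, ← pow_mul, ← pow_add]
    apply pow_le_pow_right₀ hinv1
    have hd : Nat.dist (i : ℕ) (j : ℕ) ≤ (i : ℕ) + (j : ℕ) := by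
      unfold Nat.dist; omega
    omega
  have h1 := opNorm_le_sqrt_sum_sq H
  have h3 : Real.sqrt (∑ i, ∑ j, (H i j) ^ 2) ≤ C := by
    calc Real.sqrt (∑ i, ∑ j, (H i j) ^ 2) ≤ Real.sqrt (C ^ 2) := Real.sqrt_le_sqrt h2
      _ = C := Real.sqrt_sq hCnonneg
  have h4 : C = (1 / l ^ (2 * (n - 1))) * ((1 - l ^ (2 * n)) / (1 - l ^ 2)) := by
    cases n with
    | zero => simp [hC]
    | succ m =>
      have hne : l ≠ 0 := ne_of_gt hl0
      have hl2 : l ^ 2 ≠ 1 := by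
        intro h
        nlinarith [sq_nonneg l]
      have hx1 : (l⁻¹) ^ 2 ≠ 1 := by
        rw [inv_pow]
        intro h
        exact hl2 (by rw [← inv_inv (l ^ 2), h, inv_one])
      have : C = ∑ k ∈ Finset.range (m + 1), ((l⁻¹) ^ 2) ^ k := by
        rw [hC, Fin.sum_univ_eq_sum_range (fun k => l⁻¹ ^ (2 * k))]
        exact Finset.sum_congr rfl fun k _ => by rw [← pow_mul, mul_comm]
      rw [this, geom_sum_eq hx1]
      have hsub : m + 1 - 1 = m := rfl
      rw [hsub]
      have hpow : l ^ (2 * (m + 1)) ≠ 0 := pow_ne_zero _ hne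
      have h1m : (1 : ℝ) - l ^ 2 ≠ 0 := sub_ne_zero.mpr (Ne.symm hl2)
      field_simp
      ring_nf
      have e : l ^ 2 * l ^ (m * 2) * l⁻¹ ^ 2 * l⁻¹ ^ (m * 2) = 1 := by
        rw [inv_pow, inv_pow]; field_simp
      rw [e]; ring
  linarith
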